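/- Lemma 3 of the main theorem (a pure R-matrix identity): let R: ℂ^N → End(ℂ^N⊗ℂ^N) satisfy the zero-weight condition, the translation condition, and the dynamical Yang–Baxter equation (hypotheses (i)–(iii)). Fix n, m ≥ 1 and work on (ℂ^N)^{⊗(n+m)}. For 1 ≤ i ≤ n define Q_i(x) := Π_{j=m}^{1} R_{i,n+j}(x − 2γh^{(i+1,n)} − 2γh^{(n+j+1,n+m)}) (the product ordered left to right with j decreasing from m to 1), and for 1 ≤ i ≤ n+1 define T_i(x) := ℐ^{(n+1,n+m)}(x−2γh^{(i,n)}), where ℐ^{(k,l)}(x) := R̂_{k,k+1}(x−2γh^{(k+2,l)}) R̂_{k+1,k+2}(x−2γh^{(k+3,l)}) ⋯ R̂_{l−1,l}(x) and T_{n+1}(x) = ℐ^{(n+1,n+m)}(x). Then for every x ∈ ℂ^N and every i with 1 ≤ i ≤ n: T_i(x) Q_i(x) = Q_i(x) T_{i+1}(x). -/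

import Mathlib

/- STATEMENT 15: Lemma 3 of the main theorem (a pure R-matrix identity):
   if R satisfies the zero-weight condition, the translation condition and the
   dynamical Yang–Baxter equation, then T_i(x) Q_i(x) = Q_i(x) T_{i+1}(x)
   for 1 ≤ i ≤ n, on (ℂ^N)^{⊗(n+m)}. -/

noncomputable section
open Matrix Complex
open scoped BigOperators

variable (N : ℕ) (γ : ℂ)

/-- S placed in factors 1,2 of (ℂ^N)^{⊗3}, argument shifted by s·h^{(3)} -/
def sh12 (S : (Fin N → ℂ) → Matrix (Fin N × Fin N) (Fin N × Fin N) ℂ)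
    (x : Fin N → ℂ) (s : ℂ) :
    Matrix (Fin N × Fin N × Fin N) (Fin N × Fin N × Fin N) ℂ :=
  fun p q => if p.2.2 = q.2.2 then
    S (x + s • (Pi.single q.2.2 1 : Fin N → ℂ)) (p.1, p.2.1) (q.1, q.2.1) else 0

def sh13 (S : (Fin N → ℂ) → Matrix (Fin N × Fin N) (Fin N × Fin N) ℂ)
    (x : Fin N → ℂ) (s : ℂ) :
    Matrix (Fin N × Fin N × Fin N) (Fin N × Fin N × Fin N) ℂ :=
  fun p q => if p.2.1 = q.2.1 then
    S (x + s • (Pi.single q.2.1 1 : Fin N → ℂ)) (p.1, p.2.2) (q.1, q.2.2) else 0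

def sh23 (S : (Fin N → ℂ) → Matrix (Fin N × Fin N) (Fin N × Fin N) ℂ)
    (x : Fin N → ℂ) (s : ℂ) :
    Matrix (Fin N × Fin N × Fin N) (Fin N × Fin N × Fin N) ℂ :=
  fun p q => if p.1 = q.1 then
    S (x + s • (Pi.single q.1 1 : Fin N → ℂ)) (p.2.1, p.2.2) (q.2.1, q.2.2) else 0

/-- the dynamical Yang–Baxter equation for R (no spectral parameter) -/
def DYBE (R : (Fin N → ℂ) → Matrix (Fin N × Fin N) (Fin N × Fin N) ℂ) : Prop :=
  ∀ x : Fin N → ℂ,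
    sh12 N R x γ * sh13 N R x (-γ) * sh23 N R x γ =
    sh23 N R x (-γ) * sh13 N R x γ * sh12 N R x (-γ)

/-- zero-weight condition on R -/
def ZeroWeight (R : (Fin N → ℂ) → Matrix (Fin N × Fin N) (Fin N × Fin N) ℂ) : Prop :=
  ∀ x : Fin N → ℂ, ∀ i j k l : Fin N,
    (Pi.single i 1 : Fin N → ℂ) + Pi.single j 1 ≠
      (Pi.single k 1 : Fin N → ℂ) + Pi.single l 1 →
    R x (i, j) (k, l) = 0

/-- translation condition on R -/
def TransInv (R : (Fin N → ℂ) → Matrix (Fin N × Fin N) (Fin N × Fin N) ℂ) : Prop :=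
  ∀ x : Fin N → ℂ, ∀ t : ℂ, ∀ i j k l : Fin N,
    R (x + t • ((Pi.single i 1 : Fin N → ℂ) + Pi.single j 1)) (i, j) (k, l) =
      R x (i, j) (k, l)

/-- δ_{σ(s)} + … + δ_{σ(t−1)} : sum of basis vectors carried by the factors with
    0-based positions in [s,t); this realizes the dynamical shift h^{(s+1,t)}
    (1-based labels) -/
def hsum (p : ℕ) (s t : ℕ) (σ : Fin p → Fin N) : Fin N → ℂ :=
  ∑ i : Fin p, if s ≤ (i : ℕ) ∧ (i : ℕ) < t then (Pi.single (σ i) 1 : Fin N → ℂ) else 0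

/-- R placed in (0-based) factors a, b of (ℂ^N)^{⊗p}, with σ-dependent
    evaluation point `f σ` (the dynamical shift) -/
def RPair (R : (Fin N → ℂ) → Matrix (Fin N × Fin N) (Fin N × Fin N) ℂ)
    (p : ℕ) (a b : ℕ) (f : (Fin p → Fin N) → Fin N → ℂ) :
    Matrix (Fin p → Fin N) (Fin p → Fin N) ℂ :=
  if h : a < p ∧ b < p then
    Matrix.of fun σ σ' =>
      if ∀ i : Fin p, (i : ℕ) ≠ a → (i : ℕ) ≠ b → σ i = σ' i then
        R (f σ) (σ ⟨a, h.1⟩, σ ⟨b, h.2⟩) (σ' ⟨a, h.1⟩, σ' ⟨b, h.2⟩)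
      else 0
  else 1

/-- R̂ = P·R placed in (0-based) factors a, b -/
def RhatPair (R : (Fin N → ℂ) → Matrix (Fin N × Fin N) (Fin N × Fin N) ℂ)
    (p : ℕ) (a b : ℕ) (f : (Fin p → Fin N) → Fin N → ℂ) :
    Matrix (Fin p → Fin N) (Fin p → Fin N) ℂ :=
  if h : a < p ∧ b < p then
    Matrix.of fun σ σ' =>
      if ∀ i : Fin p, (i : ℕ) ≠ a → (i : ℕ) ≠ b → σ i = σ' i then
        R (f σ) (σ ⟨b, h.2⟩, σ ⟨a, h.1⟩) (σ' ⟨a, h.1⟩, σ' ⟨b, h.2⟩)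
      else 0
  else 1

/-- 𝓘^{(k,l)} (1-based labels k..l):
    R̂_{k,k+1}(·−2γh^{(k+2,l)}) R̂_{k+1,k+2}(·−2γh^{(k+3,l)}) ⋯ R̂_{l−1,l}(·),
    where `base σ` is the evaluation point (allowing σ-dependent shifts) -/
def calI (R : (Fin N → ℂ) → Matrix (Fin N × Fin N) (Fin N × Fin N) ℂ)
    (p : ℕ) (k l : ℕ) (base : (Fin p → Fin N) → Fin N → ℂ) :
    Matrix (Fin p → Fin N) (Fin p → Fin N) ℂ :=
  ((List.range' k (l - k)).map (fun j =>
    RhatPair N R p (j - 1) j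
      (fun σ => base σ - (2 * γ) • hsum N p (j + 1) l σ))).prod

/-- Q_i(x) = Π_{j=m}^{1} R_{i,n+j}(x − 2γh^{(i+1,n)} − 2γh^{(n+j+1,n+m)}),
    1-based label i, on (ℂ^N)^{⊗(n+m)} -/
def Qmat (R : (Fin N → ℂ) → Matrix (Fin N × Fin N) (Fin N × Fin N) ℂ)
    (n m : ℕ) (i : ℕ) (x : Fin N → ℂ) :
    Matrix (Fin (n + m) → Fin N) (Fin (n + m) → Fin N) ℂ :=
  (((List.range' 1 m).reverse).map (fun j =>
    RPair N R (n + m) (i - 1) (n + j - 1)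
      (fun σ => x - (2 * γ) • hsum N (n + m) i n σ
                  - (2 * γ) • hsum N (n + m) (n + j) (n + m) σ))).prod

/-- T_i(x) = 𝓘^{(n+1,n+m)}(x − 2γ h^{(i,n)}) -/
def Tmat (R : (Fin N → ℂ) → Matrix (Fin N × Fin N) (Fin N × Fin N) ℂ)
    (n m : ℕ) (i : ℕ) (x : Fin N → ℂ) :
    Matrix (Fin (n + m) → Fin N) (Fin (n + m) → Fin N) ℂ :=
  calI N γ R (n + m) (n + 1) (n + m)
    (fun σ => x - (2 * γ) • hsum N (n + m) (i - 1) n σ)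

/-! ### Auxiliary machinery for the proof -/

section AuxLemma3

variable {R' R1 R2 : (Fin N → ℂ) → Matrix (Fin N × Fin N) (Fin N × Fin N) ℂ}

/-- sum over `Fin p` is determined by values off a pair plus the pair sum -/
lemma L3sum_pair_eq {p : ℕ} (c d : Fin p) (hcd : c ≠ d) (F G : Fin p → (Fin N → ℂ))
    (h : ∀ i, i ≠ c → i ≠ d → F i = G i) (h2 : F c + F d = G c + G d) :
    ∑ i, F i = ∑ i, G i := by
  classical
  have hd' : d ∈ Finset.univ.erase c := Finset.mem_erase.2 ⟨fun hh => hcd hh.symm, Finset.mem_univ d⟩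
  rw [← Finset.add_sum_erase _ F (Finset.mem_univ c), ← Finset.add_sum_erase _ F hd',
      ← Finset.add_sum_erase _ G (Finset.mem_univ c), ← Finset.add_sum_erase _ G hd']
  have hS : ∑ i ∈ (Finset.univ.erase c).erase d, F i = ∑ i ∈ (Finset.univ.erase c).erase d, G i := by
    refine Finset.sum_congr rfl fun i hi => ?_
    have h1 := Finset.mem_erase.1 hi
    have h2' := Finset.mem_erase.1 h1.2
    exact h i h2'.1 h1.1
  rw [hS, ← add_assoc, ← add_assoc]
  congr 1

lemma L3hsum_congr {p : ℕ} (s t : ℕ) {σ σ' : Fin p → Fin N}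
    (h : ∀ i : Fin p, s ≤ (i : ℕ) → (i : ℕ) < t → σ i = σ' i) :
    hsum N p s t σ = hsum N p s t σ' := by
  unfold hsum
  refine Finset.sum_congr rfl fun i _ => ?_
  by_cases hi : s ≤ (i : ℕ) ∧ (i : ℕ) < t
  · rw [if_pos hi, if_pos hi, h i hi.1 hi.2]
  · rw [if_neg hi, if_neg hi]

lemma L3hsum_head {p s t : ℕ} (hs : s < p) (hst : s < t) (σ : Fin p → Fin N) :
    hsum N p s t σ = (Pi.single (σ ⟨s, hs⟩) 1 : Fin N → ℂ) + hsum N p (s+1) t σ := by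
  classical
  unfold hsum
  have key : ∀ i : Fin p,
      (if s ≤ (i : ℕ) ∧ (i : ℕ) < t then (Pi.single (σ i) 1 : Fin N → ℂ) else 0)
      = (if i = ⟨s, hs⟩ then (Pi.single (σ i) 1 : Fin N → ℂ) else 0)
        + (if s + 1 ≤ (i : ℕ) ∧ (i : ℕ) < t then (Pi.single (σ i) 1 : Fin N → ℂ) else 0) := by
    intro i
    by_cases h1 : i = ⟨s, hs⟩
    · subst h1
      simp [hst]
    · have h2 : (i : ℕ) ≠ s := fun hh => h1 (Fin.ext hh)
      rw [if_neg h1, zero_add]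
      by_cases h3 : s + 1 ≤ (i : ℕ) ∧ (i : ℕ) < t
      · rw [if_pos ⟨by omega, h3.2⟩, if_pos h3]
      · rw [if_neg (by omega), if_neg h3]
  rw [Finset.sum_congr rfl fun i _ => key i, Finset.sum_add_distrib]
  congr 1
  exact Fintype.sum_ite_eq' (⟨s, hs⟩ : Fin p) (fun i => (Pi.single (σ i) 1 : Fin N → ℂ))

lemma L3hsum_zero {p s t : ℕ} (hts : t ≤ s) (σ : Fin p → Fin N) :
    hsum N p s t σ = 0 := by
  unfold hsum
  refine Finset.sum_eq_zero fun i _ => ?_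
  rw [if_neg (by omega)]

/-- entry formula for `RPair` -/
lemma L3RPair_apply {p a b : ℕ} (ha : a < p) (hb : b < p)
    (f : (Fin p → Fin N) → Fin N → ℂ) (σ σ' : Fin p → Fin N) :
    RPair N R' p a b f σ σ' =
      if (∀ i : Fin p, (i : ℕ) ≠ a → (i : ℕ) ≠ b → σ i = σ' i)
      then R' (f σ) (σ ⟨a, ha⟩, σ ⟨b, hb⟩) (σ' ⟨a, ha⟩, σ' ⟨b, hb⟩) else 0 := by
  unfold RPair
  rw [dif_pos (⟨ha, hb⟩ : a < p ∧ b < p)]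
  rfl

/-- swapping the row indices of R -/
def L3swapR (R' : (Fin N → ℂ) → Matrix (Fin N × Fin N) (Fin N × Fin N) ℂ) :
    (Fin N → ℂ) → Matrix (Fin N × Fin N) (Fin N × Fin N) ℂ :=
  fun y => Matrix.of fun q r => R' y (q.2, q.1) r

lemma L3RhatPair_eq (p a b : ℕ) (f : (Fin p → Fin N) → Fin N → ℂ) :
    RhatPair N R' p a b f = RPair N (L3swapR N R') p a b f := by
  unfold RhatPair RPair L3swapR
  by_cases h : a < p ∧ b < p
  · rw [dif_pos h, dif_pos h]; rfl
  · rw [dif_neg h, dif_neg h]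

lemma L3swapR_zw (h : ZeroWeight N R') : ZeroWeight N (L3swapR N R') := by
  intro x i j k l hne
  refine h x j i k l fun hq => hne ?_
  calc (Pi.single i 1 : Fin N → ℂ) + Pi.single j 1
      = Pi.single j 1 + Pi.single i 1 := add_comm _ _
    _ = _ := hq

end AuxLemma3

section AuxLemma3B

variable {R1 R2 : (Fin N → ℂ) → Matrix (Fin N × Fin N) (Fin N × Fin N) ℂ}

/-- two `RPair` matrices with disjoint active pairs and compatible shifts commute -/
lemma L3RPair_comm {p a b c d : ℕ} (ha : a < p) (hb : b < p) (hc : c < p) (hd : d < p)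
    (hzw1 : ZeroWeight N R1) (hzw2 : ZeroWeight N R2)
    (hac : a ≠ c) (had : a ≠ d) (hbc : b ≠ c) (hbd : b ≠ d)
    (f g : (Fin p → Fin N) → Fin N → ℂ)
    (hf : ∀ σ σ' : Fin p → Fin N,
      (∀ i : Fin p, (i : ℕ) ≠ c → (i : ℕ) ≠ d → σ i = σ' i) →
      (Pi.single (σ ⟨c, hc⟩) 1 : Fin N → ℂ) + Pi.single (σ ⟨d, hd⟩) 1 =
        (Pi.single (σ' ⟨c, hc⟩) 1 : Fin N → ℂ) + Pi.single (σ' ⟨d, hd⟩) 1 → f σ = f σ')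
    (hg : ∀ σ σ' : Fin p → Fin N,
      (∀ i : Fin p, (i : ℕ) ≠ a → (i : ℕ) ≠ b → σ i = σ' i) →
      (Pi.single (σ ⟨a, ha⟩) 1 : Fin N → ℂ) + Pi.single (σ ⟨b, hb⟩) 1 =
        (Pi.single (σ' ⟨a, ha⟩) 1 : Fin N → ℂ) + Pi.single (σ' ⟨b, hb⟩) 1 → g σ = g σ') :
    RPair N R1 p a b f * RPair N R2 p c d g = RPair N R2 p c d g * RPair N R1 p a b f := by
  classical
  ext σ τ
  rw [Matrix.mul_apply, Matrix.mul_apply]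
  set σab : Fin p → Fin N := fun i => if (i : ℕ) = a ∨ (i : ℕ) = b then τ i else σ i with hσab
  set σcd : Fin p → Fin N := fun i => if (i : ℕ) = c ∨ (i : ℕ) = d then τ i else σ i with hσcd
  have habv : ∀ i : Fin p, (i : ℕ) ≠ a → (i : ℕ) ≠ b → σab i = σ i := by
    intro i h1 h2; simp only [hσab]; rw [if_neg (by tauto)]
  have habv' : ∀ i : Fin p, ((i : ℕ) = a ∨ (i : ℕ) = b) → σab i = τ i := by
    intro i h1; simp only [hσab]; rw [if_pos h1]
  have hcdv : ∀ i : Fin p, (i : ℕ) ≠ c → (i : ℕ) ≠ d → σcd i = σ i := by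
    intro i h1 h2; simp only [hσcd]; rw [if_neg (by tauto)]
  have hcdv' : ∀ i : Fin p, ((i : ℕ) = c ∨ (i : ℕ) = d) → σcd i = τ i := by
    intro i h1; simp only [hσcd]; rw [if_pos h1]
  -- reduce each sum to a single term
  have hL : ∑ σ', RPair N R1 p a b f σ σ' * RPair N R2 p c d g σ' τ
      = RPair N R1 p a b f σ σab * RPair N R2 p c d g σab τ := by
    refine Finset.sum_eq_single_of_mem σab (Finset.mem_univ _) ?_
    intro σ' _ hne
    by_contra hcontra
    have h1 : RPair N R1 p a b f σ σ' ≠ 0 := fun hz => hcontra (by rw [hz, zero_mul])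
    have h2 : RPair N R2 p c d g σ' τ ≠ 0 := fun hz => hcontra (by rw [hz, mul_zero])
    rw [L3RPair_apply N ha hb] at h1
    rw [L3RPair_apply N hc hd] at h2
    by_cases c1 : ∀ i : Fin p, (i : ℕ) ≠ a → (i : ℕ) ≠ b → σ i = σ' i
    · by_cases c2 : ∀ i : Fin p, (i : ℕ) ≠ c → (i : ℕ) ≠ d → σ' i = τ i
      · apply hne
        funext i
        by_cases e1 : (i : ℕ) = a ∨ (i : ℕ) = b
        · rw [habv' i e1]
          exact c2 i (by rcases e1 with e | e <;> omega) (by rcases e1 with e | e <;> omega)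
        · push_neg at e1
          rw [habv i e1.1 e1.2, c1 i e1.1 e1.2]
      · rw [if_neg c2] at h2; exact h2 rfl
    · rw [if_neg c1] at h1; exact h1 rfl
  have hR : ∑ σ', RPair N R2 p c d g σ σ' * RPair N R1 p a b f σ' τ
      = RPair N R2 p c d g σ σcd * RPair N R1 p a b f σcd τ := by
    refine Finset.sum_eq_single_of_mem σcd (Finset.mem_univ _) ?_
    intro σ' _ hne
    by_contra hcontra
    have h1 : RPair N R2 p c d g σ σ' ≠ 0 := fun hz => hcontra (by rw [hz, zero_mul])
    have h2 : RPair N R1 p a b f σ' τ ≠ 0 := fun hz => hcontra (by rw [hz, mul_zero])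
    rw [L3RPair_apply N hc hd] at h1
    rw [L3RPair_apply N ha hb] at h2
    by_cases c1 : ∀ i : Fin p, (i : ℕ) ≠ c → (i : ℕ) ≠ d → σ i = σ' i
    · by_cases c2 : ∀ i : Fin p, (i : ℕ) ≠ a → (i : ℕ) ≠ b → σ' i = τ i
      · apply hne
        funext i
        by_cases e1 : (i : ℕ) = c ∨ (i : ℕ) = d
        · rw [hcdv' i e1]
          exact c2 i (by rcases e1 with e | e <;> omega) (by rcases e1 with e | e <;> omega)
        · push_neg at e1
          rw [hcdv i e1.1 e1.2, c1 i e1.1 e1.2]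
      · rw [if_neg c2] at h2; exact h2 rfl
    · rw [if_neg c1] at h1; exact h1 rfl
  rw [hL, hR]
  -- evaluate the four entries
  rw [L3RPair_apply N ha hb, L3RPair_apply N hc hd, L3RPair_apply N hc hd, L3RPair_apply N ha hb]
  have cond1 : ∀ i : Fin p, (i : ℕ) ≠ a → (i : ℕ) ≠ b → σ i = σab i :=
    fun i h1 h2 => (habv i h1 h2).symm
  have cond3 : ∀ i : Fin p, (i : ℕ) ≠ c → (i : ℕ) ≠ d → σ i = σcd i :=
    fun i h1 h2 => (hcdv i h1 h2).symm
  rw [if_pos cond1, if_pos cond3]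
  -- value simplifications
  have vab_a : σab ⟨a, ha⟩ = τ ⟨a, ha⟩ := habv' _ (Or.inl rfl)
  have vab_b : σab ⟨b, hb⟩ = τ ⟨b, hb⟩ := habv' _ (Or.inr rfl)
  have vab_c : σab ⟨c, hc⟩ = σ ⟨c, hc⟩ := habv _ (fun h => hac h.symm) (fun h => hbc h.symm)
  have vab_d : σab ⟨d, hd⟩ = σ ⟨d, hd⟩ := habv _ (fun h => had h.symm) (fun h => hbd h.symm)
  have vcd_c : σcd ⟨c, hc⟩ = τ ⟨c, hc⟩ := hcdv' _ (Or.inl rfl)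
  have vcd_d : σcd ⟨d, hd⟩ = τ ⟨d, hd⟩ := hcdv' _ (Or.inr rfl)
  have vcd_a : σcd ⟨a, ha⟩ = σ ⟨a, ha⟩ := hcdv _ hac had
  have vcd_b : σcd ⟨b, hb⟩ = σ ⟨b, hb⟩ := hcdv _ hbc hbd
  by_cases hE : ∀ i : Fin p, (i : ℕ) ≠ a → (i : ℕ) ≠ b → (i : ℕ) ≠ c → (i : ℕ) ≠ d → σ i = τ i
  · have cond2 : ∀ i : Fin p, (i : ℕ) ≠ c → (i : ℕ) ≠ d → σab i = τ i := by
      intro i h1 h2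
      by_cases e1 : (i : ℕ) = a ∨ (i : ℕ) = b
      · exact habv' i e1
      · push_neg at e1
        rw [habv i e1.1 e1.2]; exact hE i e1.1 e1.2 h1 h2
    have cond4 : ∀ i : Fin p, (i : ℕ) ≠ a → (i : ℕ) ≠ b → σcd i = τ i := by
      intro i h1 h2
      by_cases e1 : (i : ℕ) = c ∨ (i : ℕ) = d
      · exact hcdv' i e1
      · push_neg at e1
        rw [hcdv i e1.1 e1.2]; exact hE i h1 h2 e1.1 e1.2
    rw [if_pos cond2, if_pos cond4]
    rw [vab_a, vab_b, vab_c, vab_d, vcd_a, vcd_b, vcd_c, vcd_d]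
    by_cases w1 : (Pi.single (σ ⟨a, ha⟩) 1 : Fin N → ℂ) + Pi.single (σ ⟨b, hb⟩) 1 =
        (Pi.single (τ ⟨a, ha⟩) 1 : Fin N → ℂ) + Pi.single (τ ⟨b, hb⟩) 1
    · by_cases w2 : (Pi.single (σ ⟨c, hc⟩) 1 : Fin N → ℂ) + Pi.single (σ ⟨d, hd⟩) 1 =
          (Pi.single (τ ⟨c, hc⟩) 1 : Fin N → ℂ) + Pi.single (τ ⟨d, hd⟩) 1
      · have hgab : g σab = g σ := by
          refine hg σab σ (fun i h1 h2 => habv i h1 h2) ?_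
          rw [vab_a, vab_b]; exact w1.symm
        have hfcd : f σcd = f σ := by
          refine hf σcd σ (fun i h1 h2 => hcdv i h1 h2) ?_
          rw [vcd_c, vcd_d]; exact w2.symm
        rw [hgab, hfcd, mul_comm]
      · rw [hzw2 _ _ _ _ _ w2, hzw2 _ _ _ _ _ w2, mul_zero, zero_mul]
    · rw [hzw1 _ _ _ _ _ w1, hzw1 _ _ _ _ _ w1, mul_zero, zero_mul]
  · push_neg at hE
    obtain ⟨i0, na, nb, nc, nd, hne0⟩ := hE
    have cond2 : ¬ ∀ i : Fin p, (i : ℕ) ≠ c → (i : ℕ) ≠ d → σab i = τ i := by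
      intro hcond
      exact hne0 (by rw [← habv i0 na nb]; exact hcond i0 nc nd)
    have cond4 : ¬ ∀ i : Fin p, (i : ℕ) ≠ a → (i : ℕ) ≠ b → σcd i = τ i := by
      intro hcond
      exact hne0 (by rw [← hcdv i0 nc nd]; exact hcond i0 na nb)
    rw [if_neg cond2, if_neg cond4, mul_zero, mul_zero]

end AuxLemma3B

section AuxLemma3C

variable {R' : (Fin N → ℂ) → Matrix (Fin N × Fin N) (Fin N × Fin N) ℂ}

/-- `P·R` placed in factors 2,3 with shift on factor 1 -/
def L3Phat23 (R' : (Fin N → ℂ) → Matrix (Fin N × Fin N) (Fin N × Fin N) ℂ)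
    (x : Fin N → ℂ) (s : ℂ) :
    Matrix (Fin N × Fin N × Fin N) (Fin N × Fin N × Fin N) ℂ :=
  fun ρ κ => if ρ.1 = κ.1 then
    R' (x + s • (Pi.single κ.1 1 : Fin N → ℂ)) (ρ.2.2, ρ.2.1) (κ.2.1, κ.2.2) else 0

/-- swap of the last two tensor factors -/
def L3sw3 : (Fin N × Fin N × Fin N) ≃ (Fin N × Fin N × Fin N) where
  toFun p := (p.1, p.2.2, p.2.1)
  invFun p := (p.1, p.2.2, p.2.1)
  left_inv := fun _ => rfl
  right_inv := fun _ => rfl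

lemma L3sub12 (x : Fin N → ℂ) (s : ℂ) :
    (sh12 N R' x s).submatrix (L3sw3 N) (L3sw3 N) = sh13 N R' x s := rfl

lemma L3sub13 (x : Fin N → ℂ) (s : ℂ) :
    (sh13 N R' x s).submatrix (L3sw3 N) (L3sw3 N) = sh12 N R' x s := rfl

lemma L3sub23 (x : Fin N → ℂ) (s : ℂ) :
    (sh23 N R' x s).submatrix (L3sw3 N) id = L3Phat23 N R' x s := rfl

/-- the hexagonal form of the DYBE, with the permuted `R̂` factor -/
lemma L3star (hybe : DYBE N γ R') (x : Fin N → ℂ) :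
    sh13 N R' x γ * sh12 N R' x (-γ) * L3Phat23 N R' x γ
      = L3Phat23 N R' x (-γ) * (sh13 N R' x γ * sh12 N R' x (-γ)) := by
  have H := congrArg (fun M : Matrix (Fin N × Fin N × Fin N) (Fin N × Fin N × Fin N) ℂ =>
    M.submatrix (⇑(L3sw3 N)) id) (hybe x)
  have eL1 : (sh12 N R' x γ * sh13 N R' x (-γ)).submatrix (⇑(L3sw3 N)) (⇑(L3sw3 N))
      * (sh23 N R' x γ).submatrix (⇑(L3sw3 N)) id
      = (sh12 N R' x γ * sh13 N R' x (-γ) * sh23 N R' x γ).submatrix (⇑(L3sw3 N)) id :=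
    Matrix.submatrix_mul_equiv _ _ _ _ _
  have eL2 : (sh12 N R' x γ).submatrix (⇑(L3sw3 N)) (⇑(L3sw3 N))
      * (sh13 N R' x (-γ)).submatrix (⇑(L3sw3 N)) (⇑(L3sw3 N))
      = (sh12 N R' x γ * sh13 N R' x (-γ)).submatrix (⇑(L3sw3 N)) (⇑(L3sw3 N)) :=
    Matrix.submatrix_mul_equiv _ _ _ _ _
  have eR1 : (sh23 N R' x (-γ)).submatrix (⇑(L3sw3 N)) (⇑(Equiv.refl (Fin N × Fin N × Fin N)))
      * (sh13 N R' x γ * sh12 N R' x (-γ)).submatrix (⇑(Equiv.refl (Fin N × Fin N × Fin N))) id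
      = (sh23 N R' x (-γ) * (sh13 N R' x γ * sh12 N R' x (-γ))).submatrix (⇑(L3sw3 N)) id :=
    Matrix.submatrix_mul_equiv _ _ _ _ _
  simp only [Equiv.coe_refl, Matrix.submatrix_id_id] at eR1
  rw [← eL1, ← eL2, L3sub12, L3sub13, L3sub23] at H
  rw [mul_assoc (sh23 N R' x (-γ)) (sh13 N R' x γ) (sh12 N R' x (-γ))] at H
  rw [← eR1, L3sub23] at H
  rw [← mul_assoc] at H
  rw [H, mul_assoc]

/-- total weight of a triple -/
def L3wt (ρ : Fin N × Fin N × Fin N) : Fin N → ℂ :=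
  (Pi.single ρ.1 1 : Fin N → ℂ) + Pi.single ρ.2.1 1 + Pi.single ρ.2.2 1

/-- weight preservation -/
def L3WtP (A : Matrix (Fin N × Fin N × Fin N) (Fin N × Fin N × Fin N) ℂ) : Prop :=
  ∀ ρ κ, L3wt N ρ ≠ L3wt N κ → A ρ κ = 0

lemma L3WtP_mul {A B : Matrix (Fin N × Fin N × Fin N) (Fin N × Fin N × Fin N) ℂ}
    (hA : L3WtP N A) (hB : L3WtP N B) : L3WtP N (A * B) := by
  intro ρ κ hw
  rw [Matrix.mul_apply]
  refine Finset.sum_eq_zero fun α _ => ?_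
  by_cases hα : L3wt N ρ = L3wt N α
  · rw [hB α κ (fun hh => hw (hα.trans hh)), mul_zero]
  · rw [hA ρ α hα, zero_mul]

lemma L3WtP_sh12 (hzw : ZeroWeight N R') (x : Fin N → ℂ) (s : ℂ) :
    L3WtP N (sh12 N R' x s) := by
  intro ρ κ hw
  unfold sh12
  by_cases hc : ρ.2.2 = κ.2.2
  · rw [if_pos hc]
    refine hzw _ _ _ _ _ fun hpair => hw ?_
    unfold L3wt
    rw [hc]
    funext k
    have hk := congrFun hpair k
    simp only [Pi.add_apply] at hk ⊢
    linear_combination hk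
  · rw [if_neg hc]

lemma L3WtP_sh13 (hzw : ZeroWeight N R') (x : Fin N → ℂ) (s : ℂ) :
    L3WtP N (sh13 N R' x s) := by
  intro ρ κ hw
  unfold sh13
  by_cases hc : ρ.2.1 = κ.2.1
  · rw [if_pos hc]
    refine hzw _ _ _ _ _ fun hpair => hw ?_
    unfold L3wt
    rw [hc]
    funext k
    have hk := congrFun hpair k
    simp only [Pi.add_apply] at hk ⊢
    linear_combination hk
  · rw [if_neg hc]

lemma L3WtP_Phat (hzw : ZeroWeight N R') (x : Fin N → ℂ) (s : ℂ) :
    L3WtP N (L3Phat23 N R' x s) := by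
  intro ρ κ hw
  unfold L3Phat23
  by_cases hc : ρ.1 = κ.1
  · rw [if_pos hc]
    refine hzw _ _ _ _ _ fun hpair => hw ?_
    unfold L3wt
    rw [hc]
    funext k
    have hk := congrFun hpair k
    simp only [Pi.add_apply] at hk ⊢
    linear_combination hk
  · rw [if_neg hc]

/-- block equality is preserved under multiplication -/
lemma L3blk_mul (s : Fin N → ℂ)
    {A A' B B' : Matrix (Fin N × Fin N × Fin N) (Fin N × Fin N × Fin N) ℂ}
    (hA : L3WtP N A) (hA' : L3WtP N A')
    (hAe : ∀ ρ κ, L3wt N ρ = s → L3wt N κ = s → A ρ κ = A' ρ κ)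
    (hBe : ∀ ρ κ, L3wt N ρ = s → L3wt N κ = s → B ρ κ = B' ρ κ) :
    ∀ ρ κ, L3wt N ρ = s → L3wt N κ = s → (A * B) ρ κ = (A' * B') ρ κ := by
  intro ρ κ h1 h2
  rw [Matrix.mul_apply, Matrix.mul_apply]
  refine Finset.sum_congr rfl fun α _ => ?_
  by_cases hα : L3wt N α = s
  · rw [hAe ρ α h1 hα, hBe α κ hα h2]
  · rw [hA ρ α (by rw [h1]; exact fun hh => hα hh.symm),
        hA' ρ α (by rw [h1]; exact fun hh => hα hh.symm), zero_mul, zero_mul]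

/-- the shifted hexagon identity (★★) -/
lemma L3starstar (hzw : ZeroWeight N R') (htr : TransInv N R') (hybe : DYBE N γ R')
    (y : Fin N → ℂ) :
    L3Phat23 N R' y (-(2*γ)) * (sh13 N R' y 0 * sh12 N R' y (-(2*γ)))
      = sh13 N R' y 0 * sh12 N R' y (-(2*γ)) * L3Phat23 N R' y 0 := by
  ext ρ κ
  by_cases hw : L3wt N ρ = L3wt N κ
  case neg =>
    rw [L3WtP_mul N (L3WtP_Phat N hzw _ _)
          (L3WtP_mul N (L3WtP_sh13 N hzw _ _) (L3WtP_sh12 N hzw _ _)) ρ κ hw,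
        L3WtP_mul N (L3WtP_mul N (L3WtP_sh13 N hzw _ _) (L3WtP_sh12 N hzw _ _))
          (L3WtP_Phat N hzw _ _) ρ κ hw]
  case pos =>
    set s : Fin N → ℂ := L3wt N ρ with hs
    set x : Fin N → ℂ := y - γ • s with hx
    -- blockwise factor identifications
    have h13 : ∀ ρ' κ', L3wt N ρ' = s → L3wt N κ' = s →
        sh13 N R' y 0 ρ' κ' = sh13 N R' x γ ρ' κ' := by
      intro ρ' κ' h1 h2
      unfold sh13
      by_cases hc : ρ'.2.1 = κ'.2.1
      · rw [if_pos hc, if_pos hc]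
        have harg : x + γ • (Pi.single κ'.2.1 1 : Fin N → ℂ)
            = (y + (0:ℂ) • (Pi.single κ'.2.1 1 : Fin N → ℂ))
              + (-γ) • ((Pi.single ρ'.1 1 : Fin N → ℂ) + Pi.single ρ'.2.2 1) := by
          rw [hx, ← h1]
          unfold L3wt
          rw [hc]
          funext k
          simp only [Pi.add_apply, Pi.sub_apply, Pi.smul_apply, smul_eq_mul]
          ring
        rw [harg]
        exact (htr _ (-γ) _ _ _ _).symm
      · rw [if_neg hc, if_neg hc]
    have h12 : ∀ ρ' κ', L3wt N ρ' = s → L3wt N κ' = s →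
        sh12 N R' y (-(2*γ)) ρ' κ' = sh12 N R' x (-γ) ρ' κ' := by
      intro ρ' κ' h1 h2
      unfold sh12
      by_cases hc : ρ'.2.2 = κ'.2.2
      · rw [if_pos hc, if_pos hc]
        have harg : x + (-γ) • (Pi.single κ'.2.2 1 : Fin N → ℂ)
            = (y + (-(2*γ)) • (Pi.single κ'.2.2 1 : Fin N → ℂ))
              + (-γ) • ((Pi.single ρ'.1 1 : Fin N → ℂ) + Pi.single ρ'.2.1 1) := by
          rw [hx, ← h1]
          unfold L3wt
          rw [hc]
          funext k
          simp only [Pi.add_apply, Pi.sub_apply, Pi.smul_apply, smul_eq_mul]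
          ring
        rw [harg]
        exact (htr _ (-γ) _ _ _ _).symm
      · rw [if_neg hc, if_neg hc]
    have hP1 : ∀ ρ' κ', L3wt N ρ' = s → L3wt N κ' = s →
        L3Phat23 N R' y (-(2*γ)) ρ' κ' = L3Phat23 N R' x (-γ) ρ' κ' := by
      intro ρ' κ' h1 h2
      unfold L3Phat23
      by_cases hc : ρ'.1 = κ'.1
      · rw [if_pos hc, if_pos hc]
        have harg : x + (-γ) • (Pi.single κ'.1 1 : Fin N → ℂ)
            = (y + (-(2*γ)) • (Pi.single κ'.1 1 : Fin N → ℂ))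
              + (-γ) • ((Pi.single ρ'.2.2 1 : Fin N → ℂ) + Pi.single ρ'.2.1 1) := by
          rw [hx, ← h1]
          unfold L3wt
          rw [hc]
          funext k
          simp only [Pi.add_apply, Pi.sub_apply, Pi.smul_apply, smul_eq_mul]
          ring
        rw [harg]
        exact (htr _ (-γ) _ _ _ _).symm
      · rw [if_neg hc, if_neg hc]
    have hP2 : ∀ ρ' κ', L3wt N ρ' = s → L3wt N κ' = s →
        L3Phat23 N R' y 0 ρ' κ' = L3Phat23 N R' x γ ρ' κ' := by
      intro ρ' κ' h1 h2
      unfold L3Phat23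
      by_cases hc : ρ'.1 = κ'.1
      · rw [if_pos hc, if_pos hc]
        have harg : x + γ • (Pi.single κ'.1 1 : Fin N → ℂ)
            = (y + (0:ℂ) • (Pi.single κ'.1 1 : Fin N → ℂ))
              + (-γ) • ((Pi.single ρ'.2.2 1 : Fin N → ℂ) + Pi.single ρ'.2.1 1) := by
          rw [hx, ← h1]
          unfold L3wt
          rw [hc]
          funext k
          simp only [Pi.add_apply, Pi.sub_apply, Pi.smul_apply, smul_eq_mul]
          ring
        rw [harg]
        exact (htr _ (-γ) _ _ _ _).symm
      · rw [if_neg hc, if_neg hc]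
    have hκ : L3wt N κ = s := hw.symm ▸ rfl
    have hρ : L3wt N ρ = s := rfl
    -- transfer both sides to base point x and use the hexagon
    have hLHS := L3blk_mul N s (L3WtP_Phat N hzw y (-(2*γ))) (L3WtP_Phat N hzw x (-γ)) hP1
      (L3blk_mul N s (L3WtP_sh13 N hzw y 0) (L3WtP_sh13 N hzw x γ) h13 h12)
      ρ κ hρ hκ
    have hRHS := L3blk_mul N s
      (L3WtP_mul N (L3WtP_sh13 N hzw y 0) (L3WtP_sh12 N hzw y (-(2*γ))))
      (L3WtP_mul N (L3WtP_sh13 N hzw x γ) (L3WtP_sh12 N hzw x (-γ)))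
      (L3blk_mul N s (L3WtP_sh13 N hzw y 0) (L3WtP_sh13 N hzw x γ) h13 h12) hP2
      ρ κ hρ hκ
    rw [hLHS, hRHS, ← L3star N γ hybe x]
end AuxLemma3C

section AuxLemma3D

variable {R' : (Fin N → ℂ) → Matrix (Fin N × Fin N) (Fin N × Fin N) ℂ}

/-- two configurations agree off the three active positions -/
def L3blk {p : ℕ} (aI aa ab : ℕ) (σ τ : Fin p → Fin N) : Prop :=
  ∀ i : Fin p, (i : ℕ) ≠ aI → (i : ℕ) ≠ aa → (i : ℕ) ≠ ab → σ i = τ i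

def L3pi3 {p : ℕ} (aI aa ab : ℕ) (hI : aI < p) (ha : aa < p) (hb : ab < p)
    (σ : Fin p → Fin N) : Fin N × Fin N × Fin N :=
  (σ ⟨aI, hI⟩, σ ⟨aa, ha⟩, σ ⟨ab, hb⟩)

def L3emb {p : ℕ} (aI aa ab : ℕ) (σ0 : Fin p → Fin N) (t : Fin N × Fin N × Fin N) :
    Fin p → Fin N :=
  fun i => if (i : ℕ) = aI then t.1 else if (i : ℕ) = aa then t.2.1
    else if (i : ℕ) = ab then t.2.2 else σ0 i

/-- correspondence between a placed operator and its 3-factor block form -/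
def L3Corr {p : ℕ} (aI aa ab : ℕ) (hI : aI < p) (ha : aa < p) (hb : ab < p)
    (σ0 : Fin p → Fin N)
    (X : Matrix (Fin p → Fin N) (Fin p → Fin N) ℂ)
    (A : Matrix (Fin N × Fin N × Fin N) (Fin N × Fin N × Fin N) ℂ) : Prop :=
  (∀ σ τ, ¬ L3blk N aI aa ab σ τ → X σ τ = 0) ∧
  (∀ σ τ, L3blk N aI aa ab σ0 σ → L3blk N aI aa ab σ0 τ →
    X σ τ = A (L3pi3 N aI aa ab hI ha hb σ) (L3pi3 N aI aa ab hI ha hb τ))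

lemma L3supp_mul {p : ℕ} {aI aa ab : ℕ}
    {X Y : Matrix (Fin p → Fin N) (Fin p → Fin N) ℂ}
    (hX : ∀ σ τ, ¬ L3blk N aI aa ab σ τ → X σ τ = 0)
    (hY : ∀ σ τ, ¬ L3blk N aI aa ab σ τ → Y σ τ = 0) :
    ∀ σ τ, ¬ L3blk N aI aa ab σ τ → (X * Y) σ τ = 0 := by
  intro σ τ hblk
  rw [Matrix.mul_apply]
  refine Finset.sum_eq_zero fun α _ => ?_
  by_cases h1 : L3blk N aI aa ab σ α
  · by_cases h2 : L3blk N aI aa ab α τ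
    · exact absurd (fun i c1 c2 c3 => (h1 i c1 c2 c3).trans (h2 i c1 c2 c3)) hblk
    · rw [hY α τ h2, mul_zero]
  · rw [hX σ α h1, zero_mul]

lemma L3Corr_mul {p : ℕ} {aI aa ab : ℕ} (hI : aI < p) (ha : aa < p) (hb : ab < p)
    (hIa : aI ≠ aa) (hIb : aI ≠ ab) (hab : aa ≠ ab)
    {σ0 : Fin p → Fin N}
    {X Y : Matrix (Fin p → Fin N) (Fin p → Fin N) ℂ}
    {A B : Matrix (Fin N × Fin N × Fin N) (Fin N × Fin N × Fin N) ℂ}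
    (hXA : L3Corr N aI aa ab hI ha hb σ0 X A) (hYB : L3Corr N aI aa ab hI ha hb σ0 Y B) :
    L3Corr N aI aa ab hI ha hb σ0 (X * Y) (A * B) := by
  classical
  have hembblk : ∀ t, L3blk N aI aa ab σ0 (L3emb N aI aa ab σ0 t) := by
    intro t i h1 h2 h3
    unfold L3emb
    rw [if_neg h1, if_neg h2, if_neg h3]
  have hpi_emb : ∀ t, L3pi3 N aI aa ab hI ha hb (L3emb N aI aa ab σ0 t) = t := by
    intro t
    unfold L3pi3 L3emb
    have e1 : (if ((⟨aI, hI⟩ : Fin p) : ℕ) = aI then t.1 else if ((⟨aI, hI⟩ : Fin p) : ℕ) = aa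
        then t.2.1 else if ((⟨aI, hI⟩ : Fin p) : ℕ) = ab then t.2.2 else σ0 ⟨aI, hI⟩) = t.1 := by
      rw [if_pos rfl]
    have e2 : (if ((⟨aa, ha⟩ : Fin p) : ℕ) = aI then t.1 else if ((⟨aa, ha⟩ : Fin p) : ℕ) = aa
        then t.2.1 else if ((⟨aa, ha⟩ : Fin p) : ℕ) = ab then t.2.2 else σ0 ⟨aa, ha⟩) = t.2.1 := by
      rw [if_neg (fun hh => hIa hh.symm), if_pos rfl]
    have e3 : (if ((⟨ab, hb⟩ : Fin p) : ℕ) = aI then t.1 else if ((⟨ab, hb⟩ : Fin p) : ℕ) = aa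
        then t.2.1 else if ((⟨ab, hb⟩ : Fin p) : ℕ) = ab then t.2.2 else σ0 ⟨ab, hb⟩) = t.2.2 := by
      rw [if_neg (fun hh => hIb hh.symm), if_neg (fun hh => hab hh.symm), if_pos rfl]
    rw [e1, e2, e3]
  have hemb_pi : ∀ α : Fin p → Fin N, L3blk N aI aa ab σ0 α →
      L3emb N aI aa ab σ0 (L3pi3 N aI aa ab hI ha hb α) = α := by
    intro α hα
    funext i
    unfold L3emb L3pi3
    by_cases h1 : (i : ℕ) = aI
    · rw [if_pos h1]
      exact congrArg α (Fin.ext h1.symm)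
    · rw [if_neg h1]
      by_cases h2 : (i : ℕ) = aa
      · rw [if_pos h2]
        exact congrArg α (Fin.ext h2.symm)
      · rw [if_neg h2]
        by_cases h3 : (i : ℕ) = ab
        · rw [if_pos h3]
          exact congrArg α (Fin.ext h3.symm)
        · rw [if_neg h3]
          exact hα i h1 h2 h3
  constructor
  · exact L3supp_mul N hXA.1 hYB.1
  · intro σ τ hσ hτ
    rw [Matrix.mul_apply, Matrix.mul_apply]
    have step1 : ∑ α : Fin p → Fin N, X σ α * Y α τ
        = ∑ α ∈ Finset.univ.image (L3emb N aI aa ab σ0), X σ α * Y α τ := by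
      symm
      apply Finset.sum_subset (Finset.subset_univ _)
      intro α _ hα
      have hnblk : ¬ L3blk N aI aa ab σ0 α := by
        intro hblk
        exact hα (Finset.mem_image.2 ⟨L3pi3 N aI aa ab hI ha hb α, Finset.mem_univ _,
          hemb_pi α hblk⟩)
      have hnσ : ¬ L3blk N aI aa ab σ α := fun h =>
        hnblk (fun i c1 c2 c3 => (hσ i c1 c2 c3).trans (h i c1 c2 c3))
      rw [hXA.1 σ α hnσ, zero_mul]
    have hinj : ∀ t ∈ Finset.univ, ∀ t' ∈ Finset.univ,
        L3emb N aI aa ab σ0 t = L3emb N aI aa ab σ0 t' → t = t' := by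
      intro t _ t' _ hh
      have := congrArg (L3pi3 N aI aa ab hI ha hb) hh
      rwa [hpi_emb, hpi_emb] at this
    rw [step1, Finset.sum_image hinj]
    have step2 : ∀ t : Fin N × Fin N × Fin N,
        X σ (L3emb N aI aa ab σ0 t) * Y (L3emb N aI aa ab σ0 t) τ
        = A (L3pi3 N aI aa ab hI ha hb σ) t * B t (L3pi3 N aI aa ab hI ha hb τ) := by
      intro t
      rw [hXA.2 σ _ hσ (hembblk t), hYB.2 _ τ (hembblk t) hτ, hpi_emb]
    rw [Finset.sum_congr rfl fun t _ => step2 t, ← Matrix.mul_apply]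

end AuxLemma3D

section AuxLemma3E

variable {R' : (Fin N → ℂ) → Matrix (Fin N × Fin N) (Fin N × Fin N) ℂ}

lemma L3RPair_supp {p a b : ℕ} (ha : a < p) (hb : b < p) {aI aa ab : ℕ}
    (hma : a = aI ∨ a = aa ∨ a = ab) (hmb : b = aI ∨ b = aa ∨ b = ab)
    (R'' : (Fin N → ℂ) → Matrix (Fin N × Fin N) (Fin N × Fin N) ℂ)
    (f : (Fin p → Fin N) → Fin N → ℂ) :
    ∀ σ τ, ¬ L3blk N aI aa ab σ τ → RPair N R'' p a b f σ τ = 0 := by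
  intro σ τ hn
  rw [L3RPair_apply N ha hb, if_neg]
  intro hcond
  apply hn
  intro i c1 c2 c3
  refine hcond i ?_ ?_
  · rcases hma with h | h | h <;> rw [h] <;> assumption
  · rcases hmb with h | h | h <;> rw [h] <;> assumption

/-- the lifted core identity: `R̂ · R R = R R · R̂` with the dynamical shifts -/
lemma L3core {p aI aa ab : ℕ} (hI : aI < p) (ha : aa < p) (hb : ab < p)
    (hIa : aI ≠ aa) (hIb : aI ≠ ab) (hab : aa ≠ ab)
    (hzw : ZeroWeight N R') (htr : TransInv N R') (hybe : DYBE N γ R')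
    (g1 : (Fin p → Fin N) → Fin N → ℂ)
    (hg1 : ∀ σ σ' : Fin p → Fin N, L3blk N aI aa ab σ σ' → g1 σ = g1 σ') :
    RhatPair N R' p aa ab (fun σ => g1 σ - (2*γ) • (Pi.single (σ ⟨aI, hI⟩) 1 : Fin N → ℂ))
      * (RPair N R' p aI ab g1
        * RPair N R' p aI aa
            (fun σ => g1 σ - (2*γ) • (Pi.single (σ ⟨ab, hb⟩) 1 : Fin N → ℂ)))
    = RPair N R' p aI ab g1
      * RPair N R' p aI aa (fun σ => g1 σ - (2*γ) • (Pi.single (σ ⟨ab, hb⟩) 1 : Fin N → ℂ))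
      * RhatPair N R' p aa ab g1 := by
  classical
  rw [L3RhatPair_eq N, L3RhatPair_eq N]
  have supp1 := L3RPair_supp N (aI := aI) (aa := aa) (ab := ab) ha hb (Or.inr (Or.inl rfl)) (Or.inr (Or.inr rfl))
    (L3swapR N R') (fun σ => g1 σ - (2*γ) • (Pi.single (σ ⟨aI, hI⟩) 1 : Fin N → ℂ))
  have supp2 := L3RPair_supp N (aI := aI) (aa := aa) (ab := ab) hI hb (Or.inl rfl) (Or.inr (Or.inr rfl)) R' g1
  have supp3 := L3RPair_supp N (aI := aI) (aa := aa) (ab := ab) hI ha (Or.inl rfl) (Or.inr (Or.inl rfl)) R'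
    (fun σ => g1 σ - (2*γ) • (Pi.single (σ ⟨ab, hb⟩) 1 : Fin N → ℂ))
  have supp4 := L3RPair_supp N (aI := aI) (aa := aa) (ab := ab) ha hb (Or.inr (Or.inl rfl)) (Or.inr (Or.inr rfl))
    (L3swapR N R') g1
  ext σ τ
  by_cases hblk : L3blk N aI aa ab σ τ
  case neg =>
    rw [L3supp_mul N supp1 (L3supp_mul N supp2 supp3) σ τ hblk,
        L3supp_mul N (L3supp_mul N supp2 supp3) supp4 σ τ hblk]
  case pos =>
    have hblkrefl : L3blk N aI aa ab σ σ := fun i _ _ _ => rfl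
    have hy : ∀ σ₁ : Fin p → Fin N, L3blk N aI aa ab σ σ₁ → g1 σ₁ = g1 σ :=
      fun σ₁ h1 => hg1 σ₁ σ (fun i c1 c2 c3 => (h1 i c1 c2 c3).symm)
    -- the four block correspondences
    have C2 : L3Corr N aI aa ab hI ha hb σ (RPair N R' p aI ab g1)
        (sh13 N R' (g1 σ) 0) := by
      refine ⟨supp2, ?_⟩
      intro σ₁ σ₂ h1 h2
      rw [L3RPair_apply N hI hb]
      dsimp only [sh13, L3pi3]
      by_cases hc : σ₁ ⟨aa, ha⟩ = σ₂ ⟨aa, ha⟩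
      · have hcond : ∀ i : Fin p, (i : ℕ) ≠ aI → (i : ℕ) ≠ ab → σ₁ i = σ₂ i := by
          intro i c1 c3
          by_cases hia : (i : ℕ) = aa
          · rw [show i = ⟨aa, ha⟩ from Fin.ext hia]
            exact hc
          · exact ((h1 i c1 hia c3).symm).trans (h2 i c1 hia c3)
        rw [if_pos hcond, if_pos hc, hy σ₁ h1]
        congr 1
        simp
      · rw [if_neg (fun hcond => hc (hcond ⟨aa, ha⟩ (fun hh => hIa hh.symm) hab)), if_neg hc]
    have C3 : L3Corr N aI aa ab hI ha hb σ
        (RPair N R' p aI aa (fun σ₁ => g1 σ₁ - (2*γ) • (Pi.single (σ₁ ⟨ab, hb⟩) 1 : Fin N → ℂ)))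
        (sh12 N R' (g1 σ) (-(2*γ))) := by
      refine ⟨supp3, ?_⟩
      intro σ₁ σ₂ h1 h2
      rw [L3RPair_apply N hI ha]
      dsimp only [sh12, L3pi3]
      by_cases hc : σ₁ ⟨ab, hb⟩ = σ₂ ⟨ab, hb⟩
      · have hcond : ∀ i : Fin p, (i : ℕ) ≠ aI → (i : ℕ) ≠ aa → σ₁ i = σ₂ i := by
          intro i c1 c2
          by_cases hib : (i : ℕ) = ab
          · rw [show i = ⟨ab, hb⟩ from Fin.ext hib]
            exact hc
          · exact ((h1 i c1 c2 hib).symm).trans (h2 i c1 c2 hib)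
        rw [if_pos hcond, if_pos hc, hy σ₁ h1, hc]
        congr 1
        rw [neg_smul, ← sub_eq_add_neg]
      · rw [if_neg (fun hcond => hc (hcond ⟨ab, hb⟩ (fun hh => hIb hh.symm)
          (fun hh => hab hh.symm))), if_neg hc]
    have C1 : L3Corr N aI aa ab hI ha hb σ
        (RPair N (L3swapR N R') p aa ab
          (fun σ₁ => g1 σ₁ - (2*γ) • (Pi.single (σ₁ ⟨aI, hI⟩) 1 : Fin N → ℂ)))
        (L3Phat23 N R' (g1 σ) (-(2*γ))) := by
      refine ⟨supp1, ?_⟩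
      intro σ₁ σ₂ h1 h2
      rw [L3RPair_apply N ha hb]
      dsimp only [L3Phat23, L3pi3, L3swapR, Matrix.of_apply]
      by_cases hc : σ₁ ⟨aI, hI⟩ = σ₂ ⟨aI, hI⟩
      · have hcond : ∀ i : Fin p, (i : ℕ) ≠ aa → (i : ℕ) ≠ ab → σ₁ i = σ₂ i := by
          intro i c2 c3
          by_cases hii : (i : ℕ) = aI
          · rw [show i = ⟨aI, hI⟩ from Fin.ext hii]
            exact hc
          · exact ((h1 i hii c2 c3).symm).trans (h2 i hii c2 c3)
        rw [if_pos hcond, if_pos hc, hy σ₁ h1, hc]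
        congr 1
        rw [neg_smul, ← sub_eq_add_neg]
      · rw [if_neg (fun hcond => hc (hcond ⟨aI, hI⟩ hIa hIb)), if_neg hc]
    have C4 : L3Corr N aI aa ab hI ha hb σ
        (RPair N (L3swapR N R') p aa ab g1) (L3Phat23 N R' (g1 σ) 0) := by
      refine ⟨supp4, ?_⟩
      intro σ₁ σ₂ h1 h2
      rw [L3RPair_apply N ha hb]
      dsimp only [L3Phat23, L3pi3, L3swapR, Matrix.of_apply]
      by_cases hc : σ₁ ⟨aI, hI⟩ = σ₂ ⟨aI, hI⟩
      · have hcond : ∀ i : Fin p, (i : ℕ) ≠ aa → (i : ℕ) ≠ ab → σ₁ i = σ₂ i := by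
          intro i c2 c3
          by_cases hii : (i : ℕ) = aI
          · rw [show i = ⟨aI, hI⟩ from Fin.ext hii]
            exact hc
          · exact ((h1 i hii c2 c3).symm).trans (h2 i hii c2 c3)
        rw [if_pos hcond, if_pos hc, hy σ₁ h1]
        congr 1
        simp
      · rw [if_neg (fun hcond => hc (hcond ⟨aI, hI⟩ hIa hIb)), if_neg hc]
    have HL := (L3Corr_mul N hI ha hb hIa hIb hab C1
      (L3Corr_mul N hI ha hb hIa hIb hab C2 C3)).2 σ τ hblkrefl hblk
    have HR := (L3Corr_mul N hI ha hb hIa hIb hab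
      (L3Corr_mul N hI ha hb hIa hIb hab C2 C3) C4).2 σ τ hblkrefl hblk
    rw [HL, HR, L3starstar N γ hzw htr hybe (g1 σ)]

end AuxLemma3E

section AuxLemma3F

variable {R' : (Fin N → ℂ) → Matrix (Fin N × Fin N) (Fin N × Fin N) ℂ}

/-- invariance of a sum of two window-sums under a weight-preserving move at `c, d` -/
lemma L3hsum2_move {p : ℕ} (s1 t1 s2 t2 : ℕ) (c d : Fin p) (hcd : c ≠ d)
    {σ σ' : Fin p → Fin N}
    (hcw : ((s1 ≤ (c:ℕ) ∧ (c:ℕ) < t1) ∧ ¬(s2 ≤ (c:ℕ) ∧ (c:ℕ) < t2))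
      ∨ (¬(s1 ≤ (c:ℕ) ∧ (c:ℕ) < t1) ∧ (s2 ≤ (c:ℕ) ∧ (c:ℕ) < t2)))
    (hdw : ((s1 ≤ (d:ℕ) ∧ (d:ℕ) < t1) ∧ ¬(s2 ≤ (d:ℕ) ∧ (d:ℕ) < t2))
      ∨ (¬(s1 ≤ (d:ℕ) ∧ (d:ℕ) < t1) ∧ (s2 ≤ (d:ℕ) ∧ (d:ℕ) < t2)))
    (hoff : ∀ i : Fin p, i ≠ c → i ≠ d → σ i = σ' i)
    (hw : (Pi.single (σ c) 1 : Fin N → ℂ) + Pi.single (σ d) 1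
      = (Pi.single (σ' c) 1 : Fin N → ℂ) + Pi.single (σ' d) 1) :
    hsum N p s1 t1 σ + hsum N p s2 t2 σ = hsum N p s1 t1 σ' + hsum N p s2 t2 σ' := by
  unfold hsum
  rw [← Finset.sum_add_distrib, ← Finset.sum_add_distrib]
  refine L3sum_pair_eq N c d hcd _ _ (fun i hic hid => by rw [hoff i hic hid]) ?_
  rcases hcw with ⟨hc1, hc2⟩ | ⟨hc1, hc2⟩ <;> rcases hdw with ⟨hd1, hd2⟩ | ⟨hd1, hd2⟩
  · simp only [if_pos hc1, if_neg hc2, if_pos hd1, if_neg hd2]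
    simpa using hw
  · simp only [if_pos hc1, if_neg hc2, if_neg hd1, if_pos hd2]
    simpa using hw
  · simp only [if_neg hc1, if_pos hc2, if_pos hd1, if_neg hd2]
    simpa using hw
  · simp only [if_neg hc1, if_pos hc2, if_neg hd1, if_pos hd2]
    simpa using hw

/-- the Q-factors -/
def L3qf (R' : (Fin N → ℂ) → Matrix (Fin N × Fin N) (Fin N × Fin N) ℂ)
    (n m i : ℕ) (x : Fin N → ℂ) (j : ℕ) :
    Matrix (Fin (n + m) → Fin N) (Fin (n + m) → Fin N) ℂ :=
  RPair N R' (n + m) (i - 1) (n + j - 1)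
    (fun σ => x - (2 * γ) • hsum N (n + m) i n σ
      - (2 * γ) • hsum N (n + m) (n + j) (n + m) σ)

/-- the T-factors -/
def L3tf (R' : (Fin N → ℂ) → Matrix (Fin N × Fin N) (Fin N × Fin N) ℂ)
    (n m i : ℕ) (x : Fin N → ℂ) (j : ℕ) :
    Matrix (Fin (n + m) → Fin N) (Fin (n + m) → Fin N) ℂ :=
  RhatPair N R' (n + m) (j - 1) j
    (fun σ => (x - (2 * γ) • hsum N (n + m) (i - 1) n σ)
      - (2 * γ) • hsum N (n + m) (j + 1) (n + m) σ)

lemma L3Qmat_eq (R' : (Fin N → ℂ) → Matrix (Fin N × Fin N) (Fin N × Fin N) ℂ)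
    (n m i : ℕ) (x : Fin N → ℂ) :
    Qmat N γ R' n m i x = (((List.range' 1 m).reverse).map (L3qf N γ R' n m i x)).prod := rfl

lemma L3Tmat_eq (R' : (Fin N → ℂ) → Matrix (Fin N × Fin N) (Fin N × Fin N) ℂ)
    (n m i : ℕ) (x : Fin N → ℂ) :
    Tmat N γ R' n m i x
      = ((List.range' (n+1) ((n+m) - (n+1))).map (L3tf N γ R' n m i x)).prod := rfl

end AuxLemma3F

section AuxLemma3G

variable {R' : (Fin N → ℂ) → Matrix (Fin N × Fin N) (Fin N × Fin N) ℂ}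

lemma L3key (hzw : ZeroWeight N R') (htr : TransInv N R') (hybe : DYBE N γ R')
    (n m i : ℕ) (hn : 1 ≤ n) (hm : 1 ≤ m) (hi1 : 1 ≤ i) (hin : i ≤ n)
    (x : Fin N → ℂ) (j₀ : ℕ) (hj1 : n + 1 ≤ j₀) (hj2 : j₀ ≤ n + m - 1) :
    L3tf N γ R' n m i x j₀ * Qmat N γ R' n m i x
      = Qmat N γ R' n m i x * L3tf N γ R' n m (i+1) x j₀ := by
  classical
  set js := j₀ - n with hjsdef
  have hjs1 : 1 ≤ js := by omega
  have hjs2 : js ≤ m - 1 := by omega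
  -- list splitting of the Q-product
  have key1 : List.range' 1 (js-1) ++ List.range' js 2 = List.range' 1 (js+1) := by
    have h := List.range'_append_1 (s := 1) (m := js-1) (n := 2)
    rw [show 1 + (js-1) = js by omega, show (js-1) + 2 = js + 1 by omega] at h
    exact h
  have key2 : List.range' 1 (js+1) ++ List.range' (js+2) (m-js-1) = List.range' 1 m := by
    have h := List.range'_append_1 (s := 1) (m := js+1) (n := m-js-1)
    rw [show 1 + (js+1) = js+2 by omega, show (js+1) + (m-js-1) = m by omega] at h
    exact h
  have esplit : List.range' 1 m
      = (List.range' 1 (js-1) ++ List.range' js 2) ++ List.range' (js+2) (m-js-1) := by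
    rw [key1, key2]
  set T1 := L3tf N γ R' n m i x j₀ with hT1
  set T2 := L3tf N γ R' n m (i+1) x j₀ with hT2
  set M2 := L3qf N γ R' n m i x (js+1) with hM2
  set M3 := L3qf N γ R' n m i x js with hM3
  set QL := ((List.range' (js+2) (m-js-1)).reverse.map (L3qf N γ R' n m i x)).prod with hQL
  set QR := ((List.range' 1 (js-1)).reverse.map (L3qf N γ R' n m i x)).prod with hQR
  have hQ : Qmat N γ R' n m i x = QL * (M2 * (M3 * QR)) := by
    rw [L3Qmat_eq N γ R', esplit]
    rw [show List.range' js 2 = [js, js+1] from rfl]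
    simp only [List.reverse_append, List.map_append, List.prod_append,
      List.reverse_cons, List.reverse_nil, List.nil_append, List.cons_append,
      List.map_cons, List.map_nil, List.prod_cons, List.prod_nil, mul_one,
      hQL, hQR, hM2, hM3, mul_assoc]
  -- commutation with the outer Q-factors
  have hcomm1 : ∀ y ∈ (List.range' (js+2) (m-js-1)).reverse.map (L3qf N γ R' n m i x),
      Commute T1 y := by
    intro y hy
    rw [List.mem_map] at hy
    obtain ⟨jj, hjj, rfl⟩ := hy
    rw [List.mem_reverse, List.mem_range'_1] at hjj
    obtain ⟨hjja, hjjb⟩ := hjj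
    rw [hT1]
    unfold L3tf L3qf
    rw [L3RhatPair_eq N]
    refine L3RPair_comm N (show j₀ - 1 < n + m by omega) (show j₀ < n + m by omega)
      (show i - 1 < n + m by omega) (show n + jj - 1 < n + m by omega)
      (L3swapR_zw N hzw) hzw (by omega) (by omega) (by omega) (by omega) _ _ ?_ ?_
    · intro σ σ' hoff hw
      have H := L3hsum2_move N (i-1) n (j₀+1) (n+m)
        (⟨i-1, by omega⟩ : Fin (n+m)) (⟨n+jj-1, by omega⟩ : Fin (n+m))
        (fun hh => (by omega : ¬ (i-1 = n+jj-1)) (congrArg Fin.val hh))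
        (by simp only [Fin.val_mk]; exact Or.inl ⟨⟨by omega, by omega⟩, by omega⟩)
        (by simp only [Fin.val_mk]; exact Or.inr ⟨by omega, ⟨by omega, by omega⟩⟩)
        (fun k hk1 hk2 => hoff k (fun hc => hk1 (Fin.ext hc)) (fun hc => hk2 (Fin.ext hc)))
        hw
      rw [sub_sub, sub_sub, ← smul_add, ← smul_add, H]
    · intro σ σ' hoff _
      rw [L3hsum_congr N i n (fun k hk1 hk2 => hoff k (by omega) (by omega)),
        L3hsum_congr N (n+jj) (n+m) (fun k hk1 hk2 => hoff k (by omega) (by omega))]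
  have hcomm2 : ∀ y ∈ (List.range' 1 (js-1)).reverse.map (L3qf N γ R' n m i x),
      Commute T2 y := by
    intro y hy
    rw [List.mem_map] at hy
    obtain ⟨jj, hjj, rfl⟩ := hy
    rw [List.mem_reverse, List.mem_range'_1] at hjj
    obtain ⟨hjja, hjjb⟩ := hjj
    rw [hT2]
    unfold L3tf L3qf
    rw [L3RhatPair_eq N]
    refine L3RPair_comm N (show j₀ - 1 < n + m by omega) (show j₀ < n + m by omega)
      (show i - 1 < n + m by omega) (show n + jj - 1 < n + m by omega)
      (L3swapR_zw N hzw) hzw (by omega) (by omega) (by omega) (by omega) _ _ ?_ ?_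
    · intro σ σ' hoff _
      rw [L3hsum_congr N (i+1-1) n (fun k hk1 hk2 => hoff k (by omega) (by omega)),
        L3hsum_congr N (j₀+1) (n+m) (fun k hk1 hk2 => hoff k (by omega) (by omega))]
    · intro σ σ' hoff hw
      have H := L3hsum2_move N i n (n+jj) (n+m)
        (⟨j₀-1, by omega⟩ : Fin (n+m)) (⟨j₀, by omega⟩ : Fin (n+m))
        (fun hh => (by omega : ¬ (j₀-1 = j₀)) (congrArg Fin.val hh))
        (by simp only [Fin.val_mk]; exact Or.inr ⟨by omega, ⟨by omega, by omega⟩⟩)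
        (by simp only [Fin.val_mk]; exact Or.inr ⟨by omega, ⟨by omega, by omega⟩⟩)
        (fun k hk1 hk2 => hoff k (fun hc => hk1 (Fin.ext hc)) (fun hc => hk2 (Fin.ext hc)))
        hw
      rw [sub_sub, sub_sub, ← smul_add, ← smul_add, H]
  have hCQL : Commute T1 QL := Commute.list_prod_right _ _ hcomm1
  have hCQR : Commute T2 QR := Commute.list_prod_right _ _ hcomm2
  -- the core step
  have hmid : T1 * (M2 * M3) = M2 * M3 * T2 := by
    set g1 : (Fin (n+m) → Fin N) → Fin N → ℂ :=
      fun σ => x - (2 * γ) • hsum N (n + m) i n σ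
        - (2 * γ) • hsum N (n + m) (j₀ + 1) (n + m) σ with hg1def
    have hI' : i - 1 < n + m := by omega
    have ha' : j₀ - 1 < n + m := by omega
    have hb' : j₀ < n + m := by omega
    have hqf1 : M2 = RPair N R' (n+m) (i-1) j₀ g1 := by
      rw [hM2]
      unfold L3qf
      rw [show n + (js+1) - 1 = j₀ by omega, show n + (js+1) = j₀ + 1 by omega]
    have hqf2 : M3 = RPair N R' (n+m) (i-1) (j₀-1)
        (fun σ => g1 σ - (2*γ) • (Pi.single (σ ⟨j₀, hb'⟩) 1 : Fin N → ℂ)) := by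
      rw [hM3]
      unfold L3qf
      rw [show n + js - 1 = j₀ - 1 by omega, show n + js = j₀ by omega]
      refine congrArg _ ?_
      funext σ
      rw [L3hsum_head N (p := n+m) hb' (show j₀ < n + m by omega) σ]
      rw [hg1def]
      funext k
      simp only [Pi.sub_apply, Pi.add_apply, Pi.smul_apply, smul_eq_mul]
      ring
    have htf1 : T1 = RhatPair N R' (n+m) (j₀-1) j₀
        (fun σ => g1 σ - (2*γ) • (Pi.single (σ ⟨i-1, hI'⟩) 1 : Fin N → ℂ)) := by
      rw [hT1]
      unfold L3tf
      refine congrArg _ ?_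
      funext σ
      rw [L3hsum_head N (p := n+m) hI' (show i - 1 < n by omega) σ,
        show i - 1 + 1 = i by omega, hg1def]
      funext k
      simp only [Pi.sub_apply, Pi.add_apply, Pi.smul_apply, smul_eq_mul]
      ring
    have htf2 : T2 = RhatPair N R' (n+m) (j₀-1) j₀ g1 := by
      rw [hT2]
      unfold L3tf
      refine congrArg _ ?_
      funext σ
      rw [show i + 1 - 1 = i by omega, hg1def]
    have hg1inv : ∀ σ σ' : Fin (n+m) → Fin N, L3blk N (i-1) (j₀-1) j₀ σ σ' →
        g1 σ = g1 σ' := by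
      intro σ σ' hblk
      rw [hg1def]
      simp only
      rw [L3hsum_congr N i n (fun k hk1 hk2 => hblk k (by omega) (by omega) (by omega)),
        L3hsum_congr N (j₀+1) (n+m) (fun k hk1 hk2 => hblk k (by omega) (by omega) (by omega))]
    have hcore := L3core N γ (R' := R') hI' ha' hb' (by omega) (by omega) (by omega)
      hzw htr hybe g1 hg1inv
    rw [hqf1, hqf2, htf1, htf2, hcore]
  -- assembly
  rw [hQ]
  calc T1 * (QL * (M2 * (M3 * QR)))
      = QL * (T1 * (M2 * (M3 * QR))) := by rw [← mul_assoc, hCQL.eq, mul_assoc]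
    _ = QL * (M2 * M3 * T2 * QR) := by
        rw [← mul_assoc M2 M3 QR, ← mul_assoc T1 (M2 * M3) QR, hmid]
    _ = QL * (M2 * M3 * QR * T2) := by
        rw [mul_assoc (M2 * M3) T2 QR, hCQR.eq, ← mul_assoc (M2 * M3) QR T2]
    _ = QL * (M2 * (M3 * QR)) * T2 := by
        rw [mul_assoc M2 M3 QR, ← mul_assoc]

end AuxLemma3G

section AuxLemma3H

variable {R' : (Fin N → ℂ) → Matrix (Fin N × Fin N) (Fin N × Fin N) ℂ}

lemma L3claim (hzw : ZeroWeight N R') (htr : TransInv N R') (hybe : DYBE N γ R')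
    (n m i : ℕ) (hn : 1 ≤ n) (hm : 1 ≤ m) (hi1 : 1 ≤ i) (hin : i ≤ n)
    (x : Fin N → ℂ) :
    ∀ r : ℕ, r ≤ m - 1 →
    Tmat N γ R' n m i x * Qmat N γ R' n m i x
      = ((List.range' (n+1) (m-1-r)).map (L3tf N γ R' n m i x)).prod
        * Qmat N γ R' n m i x
        * ((List.range' (n+m-r) r).map (L3tf N γ R' n m (i+1) x)).prod := by
  intro r
  induction r with
  | zero =>
    intro _
    rw [L3Tmat_eq N γ R' n m i x, show (n+m) - (n+1) = m - 1 by omega]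
    simp only [Nat.sub_zero, List.range'_zero, List.map_nil, List.prod_nil, mul_one]
  | succ r ih =>
    intro hr
    have hstep := ih (by omega)
    rw [hstep]
    have hpre : List.range' (n+1) (m-1-r) = List.range' (n+1) (m-1-(r+1)) ++ [n+m-1-r] := by
      rw [show m-1-r = (m-1-(r+1)) + 1 by omega, List.range'_concat]
      rw [show (n+1) + 1*(m-1-(r+1)) = n+m-1-r by omega]
    have hsuf : List.range' (n+m-(r+1)) (r+1) = (n+m-1-r) :: List.range' (n+m-r) r := by
      rw [List.range'_succ]
      rw [show n+m-(r+1) = n+m-1-r by omega, show n+m-1-r+1 = n+m-r by omega]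
    rw [hpre, hsuf]
    simp only [List.map_append, List.prod_append, List.map_cons, List.map_nil,
      List.prod_cons, List.prod_nil, mul_one]
    have hkey := L3key N γ hzw htr hybe n m i hn hm hi1 hin x (n+m-1-r)
      (by omega) (by omega)
    rw [mul_assoc (((List.range' (n+1) (m-1-(r+1))).map (L3tf N γ R' n m i x)).prod)
        (L3tf N γ R' n m i x (n+m-1-r)) (Qmat N γ R' n m i x),
      hkey,
      ← mul_assoc (((List.range' (n+1) (m-1-(r+1))).map (L3tf N γ R' n m i x)).prod)
        (Qmat N γ R' n m i x) (L3tf N γ R' n m (i+1) x (n+m-1-r)),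
      mul_assoc _ (L3tf N γ R' n m (i+1) x (n+m-1-r))
        (((List.range' (n+m-r) r).map (L3tf N γ R' n m (i+1) x)).prod)]

end AuxLemma3H

theorem lemma3_TQ_eq_QT (hN : 2 ≤ N)
    (R : (Fin N → ℂ) → Matrix (Fin N × Fin N) (Fin N × Fin N) ℂ)
    (hzw : ZeroWeight N R) (htr : TransInv N R) (hybe : DYBE N γ R)
    (n m : ℕ) (hn : 1 ≤ n) (hm : 1 ≤ m)
    (x : Fin N → ℂ) (i : ℕ) (hi1 : 1 ≤ i) (hin : i ≤ n) :
    Tmat N γ R n m i x * Qmat N γ R n m i x =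
      Qmat N γ R n m i x * Tmat N γ R n m (i + 1) x := by
  have hclaim := L3claim N γ hzw htr hybe n m i hn hm hi1 hin x (m-1) (le_refl _)
  rw [hclaim, show m-1-(m-1) = 0 by omega, show n+m-(m-1) = n+1 by omega,
    L3Tmat_eq N γ R n m (i+1) x, show (n+m) - (n+1) = m - 1 by omega]
  simp only [List.range'_zero, List.map_nil, List.prod_nil, one_mul]
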